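/- In the Sorgenfrey plane, if a sequence of points x_k converges to a point x in the Euclidean topology of ℝ², then for any n > 0, the Euclidean interior of the box [x, x + 1/n) × [x, x + 1/n) is contained in the union over k of the boxes [x_k, x_k + 1/n)². -/
import Mathlib

open Set

/-- The basic half-open box of side `1/n` with lower-left corner `x`. -/
noncomputable def SBox (x : ℝ × ℝ) (n : ℕ) : Set (ℝ × ℝ) :=
  Set.Ico x.1 (x.1 + 1 / n) ×ˢ Set.Ico x.2 (x.2 + 1 / n)

/-- If a sequence `xₖ` converges to `x` in the Euclidean topology of `ℝ²`, then the
Euclidean interior of the box `P(x,n)` is contained in `⋃ₖ P(xₖ,n)`. -/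
theorem sorgenfrey_fact (x : ℕ → ℝ × ℝ) (x₀ : ℝ × ℝ)
    (hconv : Filter.Tendsto x Filter.atTop (nhds x₀)) (n : ℕ) (hn : 0 < n) :
    interior (SBox x₀ n) ⊆ ⋃ k, SBox (x k) n := by
  intro y hy
  rw [SBox, interior_prod_eq, interior_Ico, interior_Ico] at hy
  obtain ⟨⟨h1, h2⟩, h3, h4⟩ := hy
  set ε := min (min (y.1 - x₀.1) (x₀.1 + 1 / n - y.1))
      (min (y.2 - x₀.2) (x₀.2 + 1 / n - y.2)) with hεdef
  have hε : 0 < ε := by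
    refine lt_min (lt_min ?_ ?_) (lt_min ?_ ?_) <;> linarith
  obtain ⟨k, hk⟩ := Metric.tendsto_atTop.mp hconv ε hε
  have hk := hk k le_rfl
  rw [Prod.dist_eq, max_lt_iff] at hk
  have d1 := abs_sub_lt_iff.mp (by simpa [Real.dist_eq] using hk.1)
  have d2 := abs_sub_lt_iff.mp (by simpa [Real.dist_eq] using hk.2)
  have e1 : ε ≤ y.1 - x₀.1 := le_trans (min_le_left _ _) (min_le_left _ _)
  have e2 : ε ≤ x₀.1 + 1 / n - y.1 := le_trans (min_le_left _ _) (min_le_right _ _)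
  have e3 : ε ≤ y.2 - x₀.2 := le_trans (min_le_right _ _) (min_le_left _ _)
  have e4 : ε ≤ x₀.2 + 1 / n - y.2 := le_trans (min_le_right _ _) (min_le_right _ _)
  refine mem_iUnion.mpr ⟨k, ⟨⟨?_, ?_⟩, ?_, ?_⟩⟩ <;> linarith [d1.1, d1.2, d2.1, d2.2]
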